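/- Let E be a standard Borel space, (F, 𝓕) a measurable space, T : E → F measurable and surjective, and K a transition kernel on E reversible with respect to a probability measure π on E. Then the spectral gaps satisfy gap(T_*π, T_*K) ≥ gap(π, K). If moreover T is bijective (with measurable inverse), then gap(T_*π, T_*K) = gap(π, K). -/

import Mathlib

open MeasureTheory ProbabilityTheory
open scoped ENNReal NNReal

/-- The pushforward transition kernel `T_*K(y, B) := E[K(X, T⁻¹(B)) | T(X) = y]`, `X ∼ π`,
realized via a regular conditional distribution `condDistrib id T π` of `X` given `T(X)`. -/
noncomputable def pushKernel {E F : Type*} [MeasurableSpace E] [StandardBorelSpace E] [Nonempty E]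
    [MeasurableSpace F] (T : E → F) (π : Measure E) [IsFiniteMeasure π] (K : Kernel E E) :
    Kernel F F :=
  Kernel.map (K ∘ₖ condDistrib id T π) T

/-- A transition kernel `K` is reversible w.r.t. `π` if the measure `ν_K(dx dx') := K(x, dx') π(dx)`
on `E × E` is invariant under the coordinate swap `(x, x') ↦ (x', x)`. -/
def IsReversible {E : Type*} [MeasurableSpace E] (π : Measure E) (K : Kernel E E) : Prop :=
  (π ⊗ₘ K).map Prod.swap = π ⊗ₘ K

/-- The spectral gap `gap(π, K) := 1 − sup_{0 ≠ f ∈ L²_π} ‖K f − π(f)‖_{L²_π} / ‖f‖_{L²_π}` of a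
`π`-reversible transition kernel `K` with Markov operator `K f(x) = ∫ f(y) K(x, dy)`. -/
noncomputable def spectralGap {E : Type*} [MeasurableSpace E] (π : Measure E) (K : Kernel E E) :
    ℝ :=
  1 - sSup {r : ℝ | ∃ f : E → ℝ, MemLp f 2 π ∧ eLpNorm f 2 π ≠ 0 ∧
    r = (eLpNorm (fun x => (∫ y, f y ∂(K x)) - ∫ y, f y ∂π) 2 π).toReal
          / (eLpNorm f 2 π).toReal}

namespace SGAux

variable {α : Type*} [MeasurableSpace α]

/-- The set appearing in the definition of `spectralGap`. -/
def gapSet (μ : Measure α) (κ : Kernel α α) : Set ℝ :=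
  {r : ℝ | ∃ f : α → ℝ, MemLp f 2 μ ∧ eLpNorm f 2 μ ≠ 0 ∧
    r = (eLpNorm (fun x => (∫ y, f y ∂(κ x)) - ∫ y, f y ∂μ) 2 μ).toReal
          / (eLpNorm f 2 μ).toReal}

lemma snd_compProd_eq_bind {β : Type*} [MeasurableSpace β] (μ : Measure α) [SFinite μ]
    (κ : Kernel α β) [IsSFiniteKernel κ] :
    (μ ⊗ₘ κ).snd = μ.bind κ := by
  ext s hs
  rw [Measure.snd_apply hs, Measure.compProd_apply (measurable_snd hs),
    Measure.bind_apply hs (Kernel.measurable κ).aemeasurable]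
  rfl

lemma bind_eq_self_of_rev {μ : Measure α} [IsProbabilityMeasure μ] {κ : Kernel α α}
    [IsMarkovKernel κ] (hrev : (μ ⊗ₘ κ).map Prod.swap = μ ⊗ₘ κ) :
    μ.bind κ = μ := by
  rw [← snd_compProd_eq_bind]
  conv_lhs => rw [← hrev]
  rw [Measure.snd, Measure.map_map measurable_snd measurable_swap]
  have : (Prod.snd ∘ Prod.swap : α × α → α) = Prod.fst := rfl
  rw [this, ← Measure.fst, Measure.fst_compProd]

/-- kernel integrals only depend on the a.e. class of the integrand, a.e. w.r.t. an
invariant measure. -/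
lemma ae_kernel_integral_congr {μ : Measure α} {κ : Kernel α α}
    (hbind : μ.bind κ = μ) {f f' : α → ℝ} (h : f =ᵐ[μ] f') :
    ∀ᵐ x ∂μ, ∫ y, f y ∂(κ x) = ∫ y, f' y ∂(κ x) := by
  obtain ⟨N, hNsub, hNmeas, hNnull⟩ := exists_measurable_superset_of_null h
  have hbindN : ∫⁻ x, κ x N ∂μ = 0 := by
    rw [← Measure.bind_apply hNmeas (Kernel.measurable κ).aemeasurable, hbind]; exact hNnull
  have hae : ∀ᵐ x ∂μ, κ x N = 0 := by
    have := (lintegral_eq_zero_iff (Kernel.measurable_coe κ hNmeas)).mp hbindN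
    filter_upwards [this] with x hx using hx
  filter_upwards [hae] with x hx
  refine integral_congr_ae ?_
  exact measure_mono_null hNsub hx


/-- pointwise Jensen/Cauchy-Schwarz bound for the Markov operator. -/
lemma enorm_integral_sq_le (ν : Measure α) [IsProbabilityMeasure ν] (f : α → ℝ)
    (hf : Measurable f) :
    (‖∫ y, f y ∂ν‖₊ : ℝ≥0∞) ^ (2 : ℝ) ≤ ∫⁻ y, (‖f y‖₊ : ℝ≥0∞) ^ (2 : ℝ) ∂ν := by
  have h1 : (‖∫ y, f y ∂ν‖₊ : ℝ≥0∞) ≤ ∫⁻ y, (‖f y‖₊ : ℝ≥0∞) ∂ν :=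
    enorm_integral_le_lintegral_enorm _
  have h2 : ∫⁻ y, (‖f y‖₊ : ℝ≥0∞) ∂ν
      ≤ (∫⁻ y, (‖f y‖₊ : ℝ≥0∞) ^ (2 : ℝ) ∂ν) ^ (1 / (2:ℝ)) := by
    have hcs := ENNReal.lintegral_mul_le_Lp_mul_Lq ν Real.HolderConjugate.two_two
      (hf.enorm.aemeasurable) (aemeasurable_const (b := (1:ℝ≥0∞)))
    simpa [lintegral_const, one_mul, enorm_eq_nnnorm] using hcs
  calc (‖∫ y, f y ∂ν‖₊ : ℝ≥0∞) ^ (2 : ℝ)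
      ≤ ((∫⁻ y, (‖f y‖₊ : ℝ≥0∞) ^ (2 : ℝ) ∂ν) ^ (1 / (2:ℝ))) ^ (2 : ℝ) :=
        ENNReal.rpow_le_rpow (h1.trans h2) (by norm_num)
    _ = ∫⁻ y, (‖f y‖₊ : ℝ≥0∞) ^ (2 : ℝ) ∂ν := by
        rw [← ENNReal.rpow_mul]; norm_num

/-- the Markov operator of a kernel with invariant measure `μ` is an `L²(μ)` contraction. -/
lemma eLpNorm_kernel_le {μ : Measure α} [IsProbabilityMeasure μ] {κ : Kernel α α}
    [IsMarkovKernel κ] (hbind : μ.bind κ = μ) {f : α → ℝ} (hf : Measurable f) :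
    eLpNorm (fun x => ∫ y, f y ∂(κ x)) 2 μ ≤ eLpNorm f 2 μ := by
  rw [eLpNorm_eq_lintegral_rpow_enorm_toReal two_ne_zero ENNReal.ofNat_ne_top,
    eLpNorm_eq_lintegral_rpow_enorm_toReal two_ne_zero ENNReal.ofNat_ne_top]
  refine ENNReal.rpow_le_rpow ?_ (by norm_num)
  calc ∫⁻ x, (‖∫ y, f y ∂(κ x)‖₊ : ℝ≥0∞) ^ (ENNReal.toReal 2) ∂μ
      ≤ ∫⁻ x, ∫⁻ y, (‖f y‖₊ : ℝ≥0∞) ^ (2:ℝ) ∂(κ x) ∂μ := by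
        refine lintegral_mono fun x => ?_
        simpa using enorm_integral_sq_le (κ x) f hf
    _ = ∫⁻ y, (‖f y‖₊ : ℝ≥0∞) ^ (2:ℝ) ∂μ := by
        simp only [← enorm_eq_nnnorm]; rw [← Measure.lintegral_bind (Kernel.measurable κ).aemeasurable
          (hf.enorm.pow_const _).aemeasurable, hbind]
    _ = ∫⁻ y, (‖f y‖₊ : ℝ≥0∞) ^ (ENNReal.toReal 2) ∂μ := by norm_num

lemma memLp_kernel {μ : Measure α} [IsProbabilityMeasure μ] {κ : Kernel α α}
    [IsMarkovKernel κ] (hbind : μ.bind κ = μ) {f : α → ℝ} (hf : Measurable f)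
    (hf2 : MemLp f 2 μ) : MemLp (fun x => ∫ y, f y ∂(κ x)) 2 μ := by
  refine ⟨?_, lt_of_le_of_lt (eLpNorm_kernel_le hbind hf) hf2.2⟩
  exact (StronglyMeasurable.integral_kernel_prod_right'
    (f := fun p : α × α => f p.2) (hf.stronglyMeasurable.comp_measurable
      measurable_snd)).aestronglyMeasurable


lemma zero_mem_gapSet (μ : Measure α) [IsProbabilityMeasure μ] (κ : Kernel α α)
    [IsMarkovKernel κ] : (0:ℝ) ∈ gapSet μ κ := by
  refine ⟨fun _ => (1:ℝ), memLp_const 1, ?_, ?_⟩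
  · rw [eLpNorm_const (1:ℝ) two_ne_zero (IsProbabilityMeasure.ne_zero μ)]
    simp
  · have h1 : ∀ ν : Measure α, IsProbabilityMeasure ν → (∫ _, (1:ℝ) ∂ν) = 1 := by
      intro ν hν; simp
    have : (fun x => (∫ _, (1:ℝ) ∂(κ x)) - ∫ _, (1:ℝ) ∂μ) = fun _ => (0:ℝ) := by
      funext x
      rw [h1 (κ x) inferInstance, h1 μ inferInstance, sub_self]
    rw [this]
    simp [eLpNorm_zero]

lemma ratio_le_two {μ : Measure α} [IsProbabilityMeasure μ] {κ : Kernel α α}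
    [IsMarkovKernel κ] (hbind : μ.bind κ = μ) {f : α → ℝ} (hf2 : MemLp f 2 μ)
    (hfne : eLpNorm f 2 μ ≠ 0) :
    (eLpNorm (fun x => (∫ y, f y ∂(κ x)) - ∫ y, f y ∂μ) 2 μ).toReal
      / (eLpNorm f 2 μ).toReal ≤ 2 := by
  set f' : α → ℝ := hf2.1.mk f with hf'def
  have hf'meas : Measurable f' := hf2.1.stronglyMeasurable_mk.measurable
  have hff' : f =ᵐ[μ] f' := hf2.1.ae_eq_mk
  have hf'2 : MemLp f' 2 μ := hf2.ae_eq hff'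
  have hnorm_eq : eLpNorm f' 2 μ = eLpNorm f 2 μ := eLpNorm_congr_ae hff'.symm
  have hint_eq : ∫ y, f y ∂μ = ∫ y, f' y ∂μ := integral_congr_ae hff'
  set c := ∫ y, f y ∂μ with hc
  -- replace f by f' in the numerator
  have hnum_eq : eLpNorm (fun x => (∫ y, f y ∂(κ x)) - c) 2 μ
      = eLpNorm (fun x => (∫ y, f' y ∂(κ x)) - c) 2 μ := by
    refine eLpNorm_congr_ae ?_
    filter_upwards [ae_kernel_integral_congr hbind hff'] with x hx
    rw [hx]
  -- bound the numerator
  have hKmeas : AEStronglyMeasurable (fun x => ∫ y, f' y ∂(κ x)) μ :=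
    (StronglyMeasurable.integral_kernel_prod_right'
      (f := fun p : α × α => f' p.2) (hf'meas.stronglyMeasurable.comp_measurable
        measurable_snd)).aestronglyMeasurable
  have hcle : (‖c‖₊ : ℝ≥0∞) ≤ eLpNorm f 2 μ := by
    calc (‖c‖₊ : ℝ≥0∞) ≤ ∫⁻ y, (‖f y‖₊ : ℝ≥0∞) ∂μ := enorm_integral_le_lintegral_enorm _
      _ = eLpNorm f 1 μ := by rw [eLpNorm_one_eq_lintegral_enorm]; rfl
      _ ≤ eLpNorm f 2 μ := eLpNorm_le_eLpNorm_of_exponent_le one_le_two hf2.1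
  have hnum_le : eLpNorm (fun x => (∫ y, f' y ∂(κ x)) - c) 2 μ ≤ 2 * eLpNorm f 2 μ := by
    calc eLpNorm (fun x => (∫ y, f' y ∂(κ x)) - c) 2 μ
        ≤ eLpNorm (fun x => ∫ y, f' y ∂(κ x)) 2 μ + eLpNorm (fun _ => c) 2 μ := by
          refine eLpNorm_sub_le hKmeas aestronglyMeasurable_const one_le_two
      _ ≤ eLpNorm f 2 μ + eLpNorm f 2 μ := by
          refine add_le_add ?_ ?_
          · rw [← hnorm_eq]; exact eLpNorm_kernel_le hbind hf'meas
          · rw [eLpNorm_const c two_ne_zero (IsProbabilityMeasure.ne_zero μ)]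
            simpa [enorm_eq_nnnorm] using hcle
      _ = 2 * eLpNorm f 2 μ := (two_mul _).symm
  have hden_pos : 0 < (eLpNorm f 2 μ).toReal :=
    ENNReal.toReal_pos hfne hf2.2.ne
  rw [div_le_iff₀ hden_pos]
  have h2 : (eLpNorm (fun x => (∫ y, f y ∂(κ x)) - c) 2 μ).toReal
      ≤ (2 * eLpNorm f 2 μ).toReal := by
    refine ENNReal.toReal_mono ?_ ?_
    · exact ENNReal.mul_ne_top (by norm_num) hf2.2.ne
    · rw [hnum_eq]; exact hnum_le
  calc (eLpNorm (fun x => (∫ y, f y ∂(κ x)) - c) 2 μ).toReal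
      ≤ (2 * eLpNorm f 2 μ).toReal := h2
    _ = 2 * (eLpNorm f 2 μ).toReal := by rw [ENNReal.toReal_mul]; norm_num

lemma bddAbove_gapSet {μ : Measure α} [IsProbabilityMeasure μ] {κ : Kernel α α}
    [IsMarkovKernel κ] (hbind : μ.bind κ = μ) : BddAbove (gapSet μ κ) := by
  refine ⟨2, fun r hr => ?_⟩
  obtain ⟨f, hf2, hfne, rfl⟩ := hr
  exact ratio_le_two hbind hf2 hfne


omit [MeasurableSpace α] in
/-- the conditional expectation is an `L²` contraction. -/
lemma eLpNorm_condexp_two_le {m m0 : MeasurableSpace α} (hm : m ≤ m0) {μ : Measure α}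
    [IsFiniteMeasure μ] {f : α → ℝ} (hf : MemLp f 2 μ) :
    eLpNorm (μ[f|m]) 2 μ ≤ eLpNorm f 2 μ := by
  haveI : SigmaFinite (μ.trim hm) := inferInstance
  set fL : Lp ℝ 2 μ := hf.toLp f with hfL
  have hfLf : fL =ᵐ[μ] f := MemLp.coeFn_toLp hf
  set g : lpMeas ℝ ℝ m 2 μ := condExpL2 ℝ ℝ hm fL with hg
  have hg_eq : ((g : Lp ℝ 2 μ) : α → ℝ) =ᵐ[μ] μ[f|m] := by
    refine ae_eq_condExp_of_forall_setIntegral_eq hm (hf.integrable one_le_two)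
      (fun s _ hμs => ?_) (fun s hs hμs => ?_) ?_
    · exact integrableOn_Lp_of_measure_ne_top (g : Lp ℝ 2 μ)
        fact_one_le_two_ennreal.elim hμs.ne
    · rw [integral_condExpL2_eq hm fL hs hμs.ne]
      exact setIntegral_congr_ae (hm s hs) (hfLf.mono fun x hx _ => hx)
    · exact lpMeas.aestronglyMeasurable g
  calc eLpNorm (μ[f|m]) 2 μ = eLpNorm ((g : Lp ℝ 2 μ) : α → ℝ) 2 μ :=
        (eLpNorm_congr_ae hg_eq).symm
    _ ≤ eLpNorm (fL : α → ℝ) 2 μ := eLpNorm_condExpL2_le hm fL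
    _ = eLpNorm f 2 μ := eLpNorm_congr_ae hfLf


section Comp
variable {β γ : Type*} [MeasurableSpace β] [MeasurableSpace γ]

lemma integral_comp_kernel (η : Kernel β γ) [IsSFiniteKernel η] (κ : Kernel α β)
    [IsSFiniteKernel κ] (a : α) {f : γ → ℝ} (hf_int : Integrable f ((η ∘ₖ κ) a)) :
    ∫ z, f z ∂((η ∘ₖ κ) a) = ∫ u, ∫ z, f z ∂(η u) ∂(κ a) := by
  rw [Kernel.comp_eq_snd_compProd] at hf_int ⊢
  rw [Kernel.snd_apply] at hf_int ⊢
  rw [integral_map measurable_snd.aemeasurable hf_int.1]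
  have hint2 : Integrable (fun p : β × γ => f p.2) ((κ ⊗ₖ Kernel.prodMkLeft α η) a) :=
    (integrable_map_measure hf_int.1 measurable_snd.aemeasurable).mp hf_int
  rw [ProbabilityTheory.integral_compProd hint2]
  simp

lemma bind_comp_kernel (μ : Measure α) (η : Kernel β γ) (κ : Kernel α β) [IsSFiniteKernel η]
    [IsSFiniteKernel κ] :
    μ.bind ⇑(η ∘ₖ κ) = (μ.bind ⇑κ).bind ⇑η := by
  ext s hs
  rw [Measure.bind_apply hs (Kernel.measurable _).aemeasurable, Measure.bind_apply hs (Kernel.measurable _).aemeasurable,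
    Measure.lintegral_bind (Kernel.measurable _).aemeasurable (Kernel.measurable_coe _ hs).aemeasurable]
  refine lintegral_congr fun a => ?_
  rw [Kernel.comp_apply' _ _ _ hs]

lemma bind_map_kernel (μ : Measure α) (κ : Kernel α β) {T : β → γ} (hT : Measurable T) :
    μ.bind ⇑(Kernel.map κ T) = (μ.bind ⇑κ).map T := by
  ext s hs
  rw [Measure.bind_apply hs (Kernel.measurable _).aemeasurable, Measure.map_apply hT hs,
    Measure.bind_apply (hT hs) (Kernel.measurable _).aemeasurable]
  refine lintegral_congr fun a => ?_
  rw [Kernel.map_apply' _ hT _ hs]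

end Comp


section Push

variable {E F : Type*} [MeasurableSpace E] [StandardBorelSpace E] [Nonempty E] [MeasurableSpace F]
  {T : E → F} (hT : Measurable T) (π : Measure E) [IsProbabilityMeasure π]
  (K : Kernel E E) [IsMarkovKernel K]

include hT

omit [MeasurableSpace α] in
lemma bind_condDistrib_eq :
    (π.map T).bind ⇑(condDistrib id T π) = π := by
  haveI : IsProbabilityMeasure (π.map T) := Measure.isProbabilityMeasure_map hT.aemeasurable
  haveI : IsProbabilityMeasure (π.map (fun a => (T a, id a))) :=
    Measure.isProbabilityMeasure_map ((hT.prodMk measurable_id).aemeasurable)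
  have hdis : (π.map T) ⊗ₘ condDistrib id T π = π.map (fun a => (T a, id a)) := by
    have h1 := Measure.disintegrate (π.map (fun a => (T a, id a))) (π.map (fun a => (T a, id a))).condKernel
    have h2 : (π.map (fun a => (T a, id a))).fst = π.map T :=
      Measure.fst_map_prodMk (X := T) measurable_id
    rw [condDistrib_def, ← h2]
    exact h1
  rw [← snd_compProd_eq_bind, hdis, Measure.snd_map_prodMk (Y := id) hT, Measure.map_id]

variable (hbind : π.bind ⇑K = π)
include hbind

omit [MeasurableSpace α] in
lemma bind_comp_condDistrib_eq :
    (π.map T).bind ⇑(K ∘ₖ condDistrib id T π) = π := by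
  rw [bind_comp_kernel, bind_condDistrib_eq hT π, hbind]

omit [MeasurableSpace α] in
lemma bind_pushKernel_eq :
    (π.map T).bind ⇑(pushKernel T π K) = π.map T := by
  rw [pushKernel, bind_map_kernel _ _ hT, bind_comp_condDistrib_eq hT π K hbind]

omit [MeasurableSpace α] in
/-- core identity: the Markov operator of the pushforward kernel, pulled back by `T`, is the
conditional expectation of the original Markov operator applied to the pullback. -/
lemma push_integral_ae_eq {g : F → ℝ} (hgm : Measurable g) (hg2 : MemLp g 2 (π.map T)) :
    (fun x => ∫ z, g z ∂(pushKernel T π K (T x)))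
      =ᵐ[π] π[(fun x => ∫ y, g (T y) ∂(K x))|MeasurableSpace.comap T inferInstance] := by
  haveI : IsProbabilityMeasure (π.map T) := Measure.isProbabilityMeasure_map hT.aemeasurable
  have hfm : Measurable (fun y => g (T y)) := hgm.comp hT
  have hf2 : MemLp (fun y => g (T y)) 2 π :=
    (memLp_map_measure_iff hg2.1 hT.aemeasurable).mp hg2
  have hφint : Integrable (fun x => ∫ y, g (T y) ∂(K x)) π :=
    (memLp_kernel hbind hfm hf2).integrable one_le_two
  have h1 := condExp_ae_eq_integral_condDistrib_id (μ := π) hT hφint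
  have h2 : ∀ᵐ y ∂(π.map T), Integrable (fun x => g (T x)) ((K ∘ₖ condDistrib id T π) y) := by
    have hψm : Measurable fun y => ∫⁻ z, (‖g (T z)‖₊ : ℝ≥0∞) ∂((K ∘ₖ condDistrib id T π) y) :=
      Measurable.lintegral_kernel hfm.enorm
    have hfin : ∫⁻ y, ∫⁻ z, (‖g (T z)‖₊ : ℝ≥0∞) ∂((K ∘ₖ condDistrib id T π) y) ∂(π.map T) ≠ ∞ := by
      simp only [← enorm_eq_nnnorm]; rw [← Measure.lintegral_bind (Kernel.measurable _).aemeasurable hfm.enorm.aemeasurable,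
        bind_comp_condDistrib_eq hT π K hbind]
      exact (hf2.integrable one_le_two).2.ne
    filter_upwards [ae_lt_top hψm hfin] with y hy
    exact ⟨hfm.aestronglyMeasurable, hy⟩
  have h3 : ∀ᵐ y ∂(π.map T),
      ∫ z, g z ∂(pushKernel T π K y) = ∫ u, ∫ y, g (T y) ∂(K u) ∂(condDistrib id T π y) := by
    filter_upwards [h2] with y hy
    rw [pushKernel, Kernel.map_apply _ hT,
      integral_map hT.aemeasurable hgm.stronglyMeasurable.aestronglyMeasurable,
      integral_comp_kernel K (condDistrib id T π) y hy]
  have h4 : ∀ᵐ x ∂π, ∫ z, g z ∂(pushKernel T π K (T x))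
      = ∫ u, ∫ y, g (T y) ∂(K u) ∂(condDistrib id T π (T x)) := ae_of_ae_map hT.aemeasurable h3
  filter_upwards [h1, h4] with x hx1 hx4
  rw [hx4, ← hx1]

omit [MeasurableSpace α] in
/-- the numerator of the spectral-gap ratio for the pushforward kernel. -/
lemma push_num_eq {g : F → ℝ} (hgm : Measurable g) (hg2 : MemLp g 2 (π.map T)) :
    eLpNorm (fun y => (∫ z, g z ∂(pushKernel T π K y)) - ∫ z, g z ∂(π.map T)) 2 (π.map T)
      = eLpNorm (π[(fun x => (∫ y, g (T y) ∂(K x)) - ∫ y, g (T y) ∂π)|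
          MeasurableSpace.comap T inferInstance]) 2 π := by
  haveI : IsProbabilityMeasure (π.map T) := Measure.isProbabilityMeasure_map hT.aemeasurable
  haveI : IsMarkovKernel (pushKernel T π K) :=
    Kernel.IsMarkovKernel.map (K ∘ₖ condDistrib id T π) hT
  have hm : MeasurableSpace.comap T inferInstance ≤ (inferInstance : MeasurableSpace E) :=
    hT.comap_le
  haveI : SigmaFinite (π.trim hm) := inferInstance
  have hfm : Measurable (fun y => g (T y)) := hgm.comp hT
  have hf2 : MemLp (fun y => g (T y)) 2 π :=
    (memLp_map_measure_iff hg2.1 hT.aemeasurable).mp hg2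
  have hφint : Integrable (fun x => ∫ y, g (T y) ∂(K x)) π :=
    (memLp_kernel hbind hfm hf2).integrable one_le_two
  have hcπ : ∫ z, g z ∂(π.map T) = ∫ y, g (T y) ∂π := integral_map hT.aemeasurable hg2.1
  set c : ℝ := ∫ z, g z ∂(π.map T) with hc
  have h_meas : AEStronglyMeasurable (fun y => (∫ z, g z ∂(pushKernel T π K y)) - c)
      (π.map T) := by
    refine (StronglyMeasurable.sub ?_ stronglyMeasurable_const).aestronglyMeasurable
    exact StronglyMeasurable.integral_kernel_prod_right'
      (f := fun p : F × F => g p.2)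
      (hgm.stronglyMeasurable.comp_measurable measurable_snd)
  calc eLpNorm (fun y => (∫ z, g z ∂(pushKernel T π K y)) - c) 2 (π.map T)
      = eLpNorm ((fun y => (∫ z, g z ∂(pushKernel T π K y)) - c) ∘ T) 2 π :=
        eLpNorm_map_measure h_meas hT.aemeasurable
    _ = eLpNorm (fun x =>
          (π[(fun x => ∫ y, g (T y) ∂(K x))|MeasurableSpace.comap T inferInstance]) x - c) 2 π := by
        refine eLpNorm_congr_ae ?_
        filter_upwards [push_integral_ae_eq hT π K hbind hgm hg2] with x hx
        simp only [Function.comp_apply]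
        rw [hx]
    _ = eLpNorm (π[(fun x => (∫ y, g (T y) ∂(K x)) - c)|
          MeasurableSpace.comap T inferInstance]) 2 π := by
        refine eLpNorm_congr_ae (Filter.EventuallyEq.symm ?_)
        have hsub := condExp_sub (μ := π) (m := MeasurableSpace.comap T inferInstance)
          hφint (integrable_const c)
        have hconst : π[(fun _ : E => c)|MeasurableSpace.comap T inferInstance] = fun _ => c :=
          condExp_const hm c
        have hrfl : (fun x : E => (∫ y, g (T y) ∂(K x)) - c)
            = (fun x : E => ∫ y, g (T y) ∂(K x)) - (fun _ => c) := rfl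
        rw [hrfl]
        filter_upwards [hsub] with x hx
        rw [hx, hconst, Pi.sub_apply]
    _ = eLpNorm (π[(fun x => (∫ y, g (T y) ∂(K x)) - ∫ y, g (T y) ∂π)|
          MeasurableSpace.comap T inferInstance]) 2 π := by
        rw [hcπ]

end Push

end SGAux

theorem spectralGap_pushforward
    {E F : Type*} [MeasurableSpace E] [StandardBorelSpace E] [Nonempty E] [MeasurableSpace F]
    (T : E → F) (hT : Measurable T) (hTsurj : Function.Surjective T)
    (π : Measure E) [IsProbabilityMeasure π] (K : Kernel E E) [IsMarkovKernel K]
    (hrev : IsReversible π K) :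
    spectralGap π K ≤ spectralGap (π.map T) (pushKernel T π K) ∧
      ∀ e : E ≃ᵐ F, (⇑e = T) →
        spectralGap (π.map T) (pushKernel T π K) = spectralGap π K := by
  haveI : IsProbabilityMeasure (π.map T) := Measure.isProbabilityMeasure_map hT.aemeasurable
  haveI : IsMarkovKernel (pushKernel T π K) :=
    Kernel.IsMarkovKernel.map (K ∘ₖ condDistrib id T π) hT
  have hbind : π.bind ⇑K = π := SGAux.bind_eq_self_of_rev hrev
  have hbindF : (π.map T).bind ⇑(pushKernel T π K) = π.map T :=
    SGAux.bind_pushKernel_eq hT π K hbind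
  have hm : MeasurableSpace.comap T inferInstance ≤ (inferInstance : MeasurableSpace E) :=
    hT.comap_le
  haveI : SigmaFinite (π.trim hm) := inferInstance
  have hSg : spectralGap π K = 1 - sSup (SGAux.gapSet π K) := rfl
  have hSgF : spectralGap (π.map T) (pushKernel T π K)
      = 1 - sSup (SGAux.gapSet (π.map T) (pushKernel T π K)) := rfl
  -- main construction: from an F-side witness to an E-side witness
  have main : ∀ g : F → ℝ, MemLp g 2 (π.map T) → ∃ f : E → ℝ, Measurable f ∧
      MemLp f 2 π ∧ eLpNorm f 2 π = eLpNorm g 2 (π.map T) ∧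
      eLpNorm (fun y => (∫ z, g z ∂(pushKernel T π K y)) - ∫ z, g z ∂(π.map T)) 2 (π.map T)
        = eLpNorm (π[(fun x => (∫ y, f y ∂(K x)) - ∫ y, f y ∂π)|
            MeasurableSpace.comap T inferInstance]) 2 π := by
    intro g hg2
    set g' : F → ℝ := hg2.1.mk g with hg'def
    have hg'm : Measurable g' := hg2.1.stronglyMeasurable_mk.measurable
    have hgg' : g =ᵐ[π.map T] g' := hg2.1.ae_eq_mk
    have hg'2 : MemLp g' 2 (π.map T) := hg2.ae_eq hgg'
    refine ⟨fun x => g' (T x), hg'm.comp hT,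
      (memLp_map_measure_iff hg'2.1 hT.aemeasurable).mp hg'2, ?_, ?_⟩
    · have h1 : eLpNorm g' 2 (π.map T) = eLpNorm (g' ∘ T) 2 π :=
        eLpNorm_map_measure hg'2.1 hT.aemeasurable
      have h2 : eLpNorm g' 2 (π.map T) = eLpNorm g 2 (π.map T) := eLpNorm_congr_ae hgg'.symm
      rw [← h2, h1]; rfl
    · have hnum_congr : eLpNorm (fun y => (∫ z, g z ∂(pushKernel T π K y))
          - ∫ z, g z ∂(π.map T)) 2 (π.map T)
          = eLpNorm (fun y => (∫ z, g' z ∂(pushKernel T π K y))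
              - ∫ z, g' z ∂(π.map T)) 2 (π.map T) := by
        refine eLpNorm_congr_ae ?_
        filter_upwards [SGAux.ae_kernel_integral_congr hbindF hgg'] with y hy
        rw [hy, integral_congr_ae hgg']
      rw [hnum_congr]
      exact SGAux.push_num_eq hT π K hbind hg'm hg'2
  constructor
  · -- inequality
    rw [hSg, hSgF]
    have hbdd : BddAbove (SGAux.gapSet π K) := SGAux.bddAbove_gapSet hbind
    have h0 : (0:ℝ) ≤ sSup (SGAux.gapSet π K) :=
      le_csSup hbdd (SGAux.zero_mem_gapSet π K)
    refine sub_le_sub_left (Real.sSup_le ?_ h0) 1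
    rintro r ⟨g, hg2, hgne, rfl⟩
    obtain ⟨f, hfm, hf2, hfeq, hnum⟩ := main g hg2
    have hfne : eLpNorm f 2 π ≠ 0 := by rw [hfeq]; exact hgne
    have hEmem : MemLp (fun x => (∫ y, f y ∂(K x)) - ∫ y, f y ∂π) 2 π :=
      (SGAux.memLp_kernel hbind hfm hf2).sub (memLp_const _)
    have hle : eLpNorm (fun y => (∫ z, g z ∂(pushKernel T π K y))
          - ∫ z, g z ∂(π.map T)) 2 (π.map T)
        ≤ eLpNorm (fun x => (∫ y, f y ∂(K x)) - ∫ y, f y ∂π) 2 π := by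
      rw [hnum]
      exact SGAux.eLpNorm_condexp_two_le hm hEmem
    have hle' : (eLpNorm (fun y => (∫ z, g z ∂(pushKernel T π K y))
          - ∫ z, g z ∂(π.map T)) 2 (π.map T)).toReal
        ≤ (eLpNorm (fun x => (∫ y, f y ∂(K x)) - ∫ y, f y ∂π) 2 π).toReal :=
      ENNReal.toReal_mono hEmem.2.ne hle
    have hden : (0:ℝ) < (eLpNorm f 2 π).toReal := ENNReal.toReal_pos hfne hf2.2.ne
    calc (eLpNorm (fun y => (∫ z, g z ∂(pushKernel T π K y))
            - ∫ z, g z ∂(π.map T)) 2 (π.map T)).toReal / (eLpNorm g 2 (π.map T)).toReal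
        ≤ (eLpNorm (fun x => (∫ y, f y ∂(K x)) - ∫ y, f y ∂π) 2 π).toReal
            / (eLpNorm f 2 π).toReal := by
          rw [← hfeq]
          exact div_le_div_of_nonneg_right hle' hden.le
      _ ≤ sSup (SGAux.gapSet π K) := le_csSup hbdd ⟨f, hf2, hfne, rfl⟩
  · -- equality in the bijective case
    intro e he
    subst he
    have meq : MeasurableSpace.comap (⇑e) inferInstance = (inferInstance : MeasurableSpace E) := by
      refine le_antisymm hT.comap_le fun s hs => ?_
      refine ⟨e.symm ⁻¹' s, e.symm.measurable hs, ?_⟩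
      ext x; simp
    have hcond : ∀ ψ : E → ℝ, Measurable ψ → Integrable ψ π →
        π[ψ|MeasurableSpace.comap (⇑e) inferInstance] = ψ := by
      intro ψ hψm hψint
      rw [meq]
      exact condExp_of_stronglyMeasurable le_rfl hψm.stronglyMeasurable hψint
    have hSeq : SGAux.gapSet (π.map ⇑e) (pushKernel (⇑e) π K) = SGAux.gapSet π K := by
      ext r
      constructor
      · rintro ⟨g, hg2, hgne, rfl⟩
        obtain ⟨f, hfm, hf2, hfeq, hnum⟩ := main g hg2
        have hAm : Measurable (fun x => (∫ y, f y ∂(K x)) - ∫ y, f y ∂π) := by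
          refine Measurable.sub ?_ measurable_const
          exact (StronglyMeasurable.integral_kernel_prod_right'
            (f := fun p : E × E => f p.2)
            (hfm.stronglyMeasurable.comp_measurable measurable_snd)).measurable
        have hAint : Integrable (fun x => (∫ y, f y ∂(K x)) - ∫ y, f y ∂π) π :=
          ((SGAux.memLp_kernel hbind hfm hf2).sub (memLp_const _)).integrable one_le_two
        refine ⟨f, hf2, by rw [hfeq]; exact hgne, ?_⟩
        rw [hnum, hcond _ hAm hAint, hfeq]
      · rintro ⟨f, hf2, hfne, rfl⟩
        set f' : E → ℝ := hf2.1.mk f with hf'def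
        have hf'm : Measurable f' := hf2.1.stronglyMeasurable_mk.measurable
        have hff' : f =ᵐ[π] f' := hf2.1.ae_eq_mk
        have hf'2 : MemLp f' 2 π := hf2.ae_eq hff'
        -- E-side congruence: replace f by f'
        have hnumE : eLpNorm (fun x => (∫ y, f y ∂(K x)) - ∫ y, f y ∂π) 2 π
            = eLpNorm (fun x => (∫ y, f' y ∂(K x)) - ∫ y, f' y ∂π) 2 π := by
          refine eLpNorm_congr_ae ?_
          filter_upwards [SGAux.ae_kernel_integral_congr hbind hff'] with x hx
          rw [hx, integral_congr_ae hff']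
        have hdenE : eLpNorm f 2 π = eLpNorm f' 2 π := eLpNorm_congr_ae hff'
        -- the F-side witness
        set g : F → ℝ := fun y => f' (e.symm y) with hgdef
        have hgm : Measurable g := hf'm.comp e.symm.measurable
        have hge : (fun x => g (e x)) = f' := by
          funext x; simp [hgdef]
        have hg2 : MemLp g 2 (π.map ⇑e) := by
          refine (memLp_map_measure_iff hgm.stronglyMeasurable.aestronglyMeasurable
            hT.aemeasurable).mpr ?_
          have : g ∘ ⇑e = f' := by funext x; simp [hgdef]
          rw [this]; exact hf'2
        have hgnorm : eLpNorm g 2 (π.map ⇑e) = eLpNorm f' 2 π := by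
          rw [eLpNorm_map_measure hgm.stronglyMeasurable.aestronglyMeasurable hT.aemeasurable]
          have : g ∘ ⇑e = f' := by funext x; simp [hgdef]
          rw [this]
        refine ⟨g, hg2, by rw [hgnorm, ← hdenE]; exact hfne, ?_⟩
        have hA'm : Measurable (fun x => (∫ y, g (e y) ∂(K x)) - ∫ y, g (e y) ∂π) := by
          refine Measurable.sub ?_ measurable_const
          exact (StronglyMeasurable.integral_kernel_prod_right'
            (f := fun p : E × E => g (e p.2))
            ((hgm.comp hT).stronglyMeasurable.comp_measurable measurable_snd)).measurable
        have hA'int : Integrable (fun x => (∫ y, g (e y) ∂(K x)) - ∫ y, g (e y) ∂π) π :=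
          ((SGAux.memLp_kernel hbind (hgm.comp hT)
            ((memLp_map_measure_iff hg2.1 hT.aemeasurable).mp hg2)).sub
              (memLp_const _)).integrable one_le_two
        have hfix : (fun x => (∫ y, g (e y) ∂(K x)) - ∫ y, g (e y) ∂π)
            = (fun x => (∫ y, f' y ∂(K x)) - ∫ y, f' y ∂π) := by
          simp only [hgdef, MeasurableEquiv.symm_apply_apply]
        rw [SGAux.push_num_eq hT π K hbind hgm hg2, hcond _ hA'm hA'int, hgnorm, ← hdenE, hnumE,
          hfix]
    rw [hSg, hSgF, hSeq]
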